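/- Let d ≥ 3 and q small. The mean hitting time of {η(0) = 0} for the stationary FA1f process on ℤ^d satisfies E_μ(τ_0) ≥ C q^{−2}. -/

import Mathlib

open Finset ENNReal

noncomputable section

/-- The configuration `η` flipped at the site `x`. -/
def flipCfg {d : ℕ} (η : (Fin d → ℤ) → Bool) (x : Fin d → ℤ) : (Fin d → ℤ) → Bool :=
  fun y => if y = x then !(η y) else η y

/-- The nearest neighbours of a site `x ∈ ℤ^d`. -/
def latNbrs {d : ℕ} (x : Fin d → ℤ) : Finset (Fin d → ℤ) :=
  Finset.univ.biUnion fun i : Fin d =>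
    {Function.update x i (x i + 1), Function.update x i (x i - 1)}

/-- Extension of a configuration on a finite set of sites by fully occupied outside. -/
def extendCfg {d : ℕ} (s : Finset (Fin d → ℤ)) (η : ↥s → Bool) : (Fin d → ℤ) → Bool :=
  fun x => if h : x ∈ s then η ⟨x, h⟩ else true

/-- Expectation, under the product Bernoulli(1−q) measure (`true` = occupied, probability
`1−q`; `false` = empty, probability `q`), of a function depending only on the sites in the
finite set `s`. -/
def Eloc {d : ℕ} (q : ℝ) (s : Finset (Fin d → ℤ)) (g : ((Fin d → ℤ) → Bool) → ℝ) : ℝ :=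
  ∑ η : ↥s → Bool, (∏ v : ↥s, if η v then (1 - q) else q) * g (extendCfg s η)

/-- The FA1f constraint at `x` (as a real indicator): some nearest neighbour of `x` is empty. -/
def cInd {d : ℕ} (η : (Fin d → ℤ) → Bool) (x : Fin d → ℤ) : ℝ :=
  if ∃ y ∈ latNbrs x, η y = false then 1 else 0

/-- The FA1f Dirichlet form `D(f) = q(1−q) Σ_x μ(c_x (f(η^x) − f(η))²)` of a function `f`
depending only on the sites in the finite set `s`. -/
def Dform {d : ℕ} (q : ℝ) (s : Finset (Fin d → ℤ)) (f : ((Fin d → ℤ) → Bool) → ℝ) : ℝ :=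
  q * (1 - q) * ∑' x : Fin d → ℤ,
    Eloc q (s ∪ insert x (latNbrs x))
      (fun η => cInd η x * (f (flipCfg η x) - f η) ^ 2)

/-- `f` depends only on the sites in `s`. -/
def localOn {d : ℕ} (s : Finset (Fin d → ℤ)) (f : ((Fin d → ℤ) → Bool) → ℝ) : Prop :=
  ∀ η η' : (Fin d → ℤ) → Bool, (∀ x ∈ s, η x = η' x) → f η = f η'

/-- Variance of a function depending only on the sites in `s`. -/
def Varloc {d : ℕ} (q : ℝ) (s : Finset (Fin d → ℤ)) (f : ((Fin d → ℤ) → Bool) → ℝ) : ℝ :=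
  Eloc q s fun η => (f η - Eloc q s f) ^ 2

/-- The mean hitting time `E_μ(τ_0)` of the event `{η(0) = 0}` for the stationary FA1f
process on `ℤ^d`, via the variational principle
`E_μ(τ_0) = sup{μ(f)²/D(f) : f local, f = 0 on {η(0) = 0}}`. -/
def hitTime (d : ℕ) (q : ℝ) : ℝ≥0∞ :=
  sSup {r : ℝ≥0∞ | ∃ (s : Finset (Fin d → ℤ)) (f : ((Fin d → ℤ) → Bool) → ℝ),
    localOn s f ∧ (∀ η, η (fun _ => 0) = false → f η = 0) ∧
    r = ENNReal.ofReal (Eloc q s f ^ 2) / ENNReal.ofReal (Dform q s f)}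

/-! ### Auxiliary lemmas -/

/-- A sum over Boolean configurations of a product factorizes. -/
lemma sum_prod_bool {ι : Type*} [Fintype ι] [DecidableEq ι] (w : ι → Bool → ℝ) :
    ∑ η : ι → Bool, ∏ v, w v (η v) = ∏ v, (w v true + w v false) := by
  have := (Fintype.prod_sum (κ := fun _ : ι => Bool) (fun v b => w v b)).symm
  simpa [Fintype.sum_bool] using this

/-- Single-site marginal of the Bernoulli product measure. -/
lemma Eloc_ind {d : ℕ} (q : ℝ) {s : Finset (Fin d → ℤ)} {y : Fin d → ℤ} (hy : y ∈ s)
    (b : Bool) :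
    Eloc q s (fun η => if η y = b then 1 else 0) = if b then 1 - q else q := by
  classical
  set y₀ : ↥s := ⟨y, hy⟩
  have key : ∀ η : ↥s → Bool,
      (∏ v : ↥s, if η v then (1 - q) else q) *
        (if extendCfg s η y = b then (1:ℝ) else 0)
      = ∏ v : ↥s, ((if η v then (1 - q) else q) *
          (if v = y₀ then (if η v = b then (1:ℝ) else 0) else 1)) := by
    intro η
    rw [Finset.prod_mul_distrib]
    congr 1
    rw [Finset.prod_ite_eq' Finset.univ y₀ (fun v => if η v = b then (1:ℝ) else 0)]
    simp [extendCfg, hy, y₀]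
  unfold Eloc
  calc ∑ η : ↥s → Bool, (∏ v : ↥s, if η v then (1 - q) else q) *
        (if extendCfg s η y = b then (1:ℝ) else 0)
      = ∑ η : ↥s → Bool, ∏ v : ↥s, ((if η v then (1 - q) else q) *
          (if v = y₀ then (if η v = b then (1:ℝ) else 0) else 1)) := by
        exact Finset.sum_congr rfl fun η _ => key η
    _ = ∏ v : ↥s, (((if true = (true:Bool) then (1 - q) else q) *
          (if v = y₀ then (if true = b then (1:ℝ) else 0) else 1)) +
          ((if false = (true:Bool) then (1 - q) else q) *
          (if v = y₀ then (if false = b then (1:ℝ) else 0) else 1))) := by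
        exact sum_prod_bool (fun v c => (if c then (1 - q) else q) *
          (if v = y₀ then (if c = b then (1:ℝ) else 0) else 1))
    _ = ∏ v : ↥s, (if v = y₀ then (if b then 1 - q else q) else 1) := by
        refine Finset.prod_congr rfl fun v _ => ?_
        by_cases hv : v = y₀ <;> cases b <;> simp [hv]
    _ = if b then 1 - q else q := by
        rw [Finset.prod_ite_eq' Finset.univ y₀ (fun _ => if b then 1 - q else q)]
        simp

/-- `Eloc` is monotone (for `0 ≤ q ≤ 1`). -/
lemma Eloc_mono {d : ℕ} {q : ℝ} (hq0 : 0 ≤ q) (hq1 : q ≤ 1) {s : Finset (Fin d → ℤ)}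
    {g g' : ((Fin d → ℤ) → Bool) → ℝ} (h : ∀ η, g η ≤ g' η) :
    Eloc q s g ≤ Eloc q s g' := by
  unfold Eloc
  refine Finset.sum_le_sum fun η _ => ?_
  refine mul_le_mul_of_nonneg_left (h _) ?_
  refine Finset.prod_nonneg fun v _ => ?_
  split <;> linarith

/-- `Eloc` commutes with finite sums. -/
lemma Eloc_finsum {d : ℕ} {q : ℝ} {s : Finset (Fin d → ℤ)} {α : Type*} (Y : Finset α)
    (g : α → ((Fin d → ℤ) → Bool) → ℝ) :
    Eloc q s (fun η => ∑ y ∈ Y, g y η) = ∑ y ∈ Y, Eloc q s (g y) := by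
  unfold Eloc
  simp_rw [Finset.mul_sum]
  exact Finset.sum_comm

lemma card_latNbrs_le {d : ℕ} (x : Fin d → ℤ) : (latNbrs x).card ≤ 2 * d := by
  unfold latNbrs
  refine (Finset.card_biUnion_le).trans ?_
  calc ∑ i : Fin d, ({Function.update x i (x i + 1), Function.update x i (x i - 1)} :
        Finset (Fin d → ℤ)).card
      ≤ ∑ _i : Fin d, 2 := by
        refine Finset.sum_le_sum fun i _ => ?_
        exact (Finset.card_insert_le _ _).trans (by simp)
    _ = 2 * d := by simp [mul_comm]

/-- in dimension `d ≥ 3`, `E_μ(τ_0) ≥ C q^{−2}` for small `q`. -/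
theorem hitTime_ge_high_dim (d : ℕ) (hd : 3 ≤ d) :
    ∃ C > (0 : ℝ), ∃ q₀ > (0 : ℝ), ∀ q : ℝ, 0 < q → q ≤ q₀ →
      ENNReal.ofReal (C * q ^ (-2 : ℤ)) ≤ hitTime d q := by
  classical
  have hd0 : (0:ℝ) < d := by
    have : 0 < d := lt_of_lt_of_le (by norm_num) hd
    exact_mod_cast this
  refine ⟨1 / (4 * d), by positivity, 1/2, by norm_num, ?_⟩
  intro q hq0 hq2
  have hq1 : q ≤ 1 := le_trans hq2 (by norm_num)
  set z₀ : Fin d → ℤ := fun _ => 0 with hz₀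
  set s : Finset (Fin d → ℤ) := {z₀} with hs
  have hz₀s : z₀ ∈ s := Finset.mem_singleton_self _
  set f : ((Fin d → ℤ) → Bool) → ℝ := fun η => if η z₀ = true then 1 else 0 with hf
  -- f is local and vanishes on {η(0) = 0}
  have hloc : localOn s f := by
    intro η η' h
    simp only [hf]
    rw [h z₀ hz₀s]
  have hvan : ∀ η : (Fin d → ℤ) → Bool, η (fun _ => 0) = false → f η = 0 := by
    intro η h
    simp [hf, hz₀, h]
  -- the mean of f
  have hEf : Eloc q s f = 1 - q := by
    have := Eloc_ind q hz₀s true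
    simpa [hf] using this
  set t : Finset (Fin d → ℤ) := s ∪ insert z₀ (latNbrs z₀) with ht
  -- Dirichlet form: only the flip at the origin contributes
  have hD : Dform q s f = q * (1 - q) * Eloc q t (fun η => cInd η z₀) := by
    unfold Dform
    congr 1
    rw [tsum_eq_single z₀ ?_]
    · refine congrArg _ (funext fun η => ?_)
      have hflip : flipCfg η z₀ z₀ = !(η z₀) := by simp [flipCfg]
      have hsq : (f (flipCfg η z₀) - f η) ^ 2 = 1 := by
        simp only [hf, hflip]
        cases h : η z₀ <;> simp [h]
      rw [hsq, mul_one]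
    · intro x hx
      have hzero : ∀ η : (Fin d → ℤ) → Bool,
          cInd η x * (f (flipCfg η x) - f η) ^ 2 = 0 := by
        intro η
        have hne : ¬ z₀ = x := fun h => hx h.symm
        have : flipCfg η x z₀ = η z₀ := by
          simp [flipCfg, hne]
        simp [hf, this]
      unfold Eloc
      simp [hzero]
  -- upper bound on the Dirichlet form
  have hEc : Eloc q t (fun η => cInd η z₀) ≤ 2 * d * q := by
    have hstep : Eloc q t (fun η => cInd η z₀) ≤
        Eloc q t (fun η => ∑ y ∈ latNbrs z₀, (if η y = false then (1:ℝ) else 0)) := by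
      refine Eloc_mono hq0.le hq1 fun η => ?_
      unfold cInd
      split
      · next h =>
          obtain ⟨y, hy, hyf⟩ := h
          refine Finset.single_le_sum (f := fun y => if η y = false then (1:ℝ) else 0)
            (fun i _ => by positivity) hy |>.trans_eq' ?_
          simp [hyf]
      · positivity
    refine hstep.trans ?_
    rw [Eloc_finsum]
    have hmem : ∀ y ∈ latNbrs z₀, y ∈ t := by
      intro y hy
      exact Finset.mem_union_right _ (Finset.mem_insert_of_mem hy)
    calc ∑ y ∈ latNbrs z₀, Eloc q t (fun η => if η y = false then (1:ℝ) else 0)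
        = ∑ y ∈ latNbrs z₀, q := by
          refine Finset.sum_congr rfl fun y hy => ?_
          simpa using Eloc_ind q (hmem y hy) false
      _ = (latNbrs z₀).card * q := by rw [Finset.sum_const, nsmul_eq_mul]
      _ ≤ 2 * d * q := by
          have := card_latNbrs_le z₀
          have h2 : ((latNbrs z₀).card : ℝ) ≤ 2 * d := by exact_mod_cast this
          nlinarith
  have hDle : Dform q s f ≤ 2 * d * q ^ 2 * (1 - q) := by
    rw [hD]
    have hq1' : (0:ℝ) ≤ 1 - q := by linarith
    nlinarith [mul_le_mul_of_nonneg_left hEc (mul_nonneg hq0.le hq1')]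
  -- the candidate ratio is in the defining set of hitTime
  have hr : ENNReal.ofReal ((1 - q) ^ 2) / ENNReal.ofReal (Dform q s f) ≤ hitTime d q := by
    refine le_sSup ?_
    exact ⟨s, f, hloc, hvan, by rw [hEf]⟩
  refine le_trans ?_ hr
  -- final computation
  have hC : (0:ℝ) ≤ 1 / (4 * d) * q ^ (-2 : ℤ) := by positivity
  have hNpos : (0:ℝ) < (1 - q) ^ 2 := by nlinarith
  rw [ENNReal.le_div_iff_mul_le (Or.inr (by simp [hNpos]; intro h; linarith))
    (Or.inl ENNReal.ofReal_ne_top)]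
  rw [← ENNReal.ofReal_mul hC]
  refine ENNReal.ofReal_le_ofReal ?_
  have hmul : 1 / (4 * d) * q ^ (-2 : ℤ) * Dform q s f ≤
      1 / (4 * d) * q ^ (-2 : ℤ) * (2 * d * q ^ 2 * (1 - q)) :=
    mul_le_mul_of_nonneg_left hDle hC
  refine hmul.trans ?_
  have hqz : q ^ (-2 : ℤ) = (q ^ 2)⁻¹ := by
    rw [zpow_neg, zpow_two, sq]
  rw [hqz]
  have hq2ne : q ^ 2 ≠ 0 := by positivity
  have : 1 / (4 * d) * (q ^ 2)⁻¹ * (2 * d * q ^ 2 * (1 - q)) = (1 - q) / 2 := by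
    field_simp
    ring
  rw [this]
  nlinarith

end
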